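/- For all natural numbers g, the integer sequence a_g := ∑_{i=0}^{g} C(g,i)·F_{2i−1} (with F_{−1} = 1) satisfies the linear recurrence a_{g+2} = 5·a_{g+1} − 5·a_g. -/

import Mathlib

/-- Fibonacci numbers extended to integer index `-1` by `F_{-1} = 1`
(only indices `≥ -1` are used). -/
def fibZ (k : ℤ) : ℤ :=
  if k = -1 then 1 else Nat.fib k.toNat

/-- `a g = ∑_{i=0}^{g} C(g,i) · F_{2i-1}` with `F_{-1} = 1`. -/
def a (g : ℕ) : ℤ :=
  ∑ i ∈ Finset.range (g + 1), (g.choose i : ℤ) * fibZ (2 * i - 1)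

def b (g : ℕ) : ℤ :=
  ∑ i ∈ Finset.range (g + 1), (g.choose i : ℤ) * fibZ (2 * i + 1)

lemma pascal_sum (g : ℕ) (f : ℕ → ℤ) :
    ∑ i ∈ Finset.range (g + 2), ((g + 1).choose i : ℤ) * f i =
      ∑ i ∈ Finset.range (g + 1), (g.choose i : ℤ) * f i +
      ∑ i ∈ Finset.range (g + 1), (g.choose i : ℤ) * f (i + 1) := by
  have h1 : ∑ i ∈ Finset.range (g + 2), ((g + 1).choose i : ℤ) * f i
      = (∑ i ∈ Finset.range (g + 1), ((g + 1).choose (i + 1) : ℤ) * f (i + 1))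
        + ((g + 1).choose 0 : ℤ) * f 0 := Finset.sum_range_succ' _ _
  have h2 : ∑ i ∈ Finset.range (g + 2), (g.choose i : ℤ) * f i
      = (∑ i ∈ Finset.range (g + 1), (g.choose (i + 1) : ℤ) * f (i + 1))
        + (g.choose 0 : ℤ) * f 0 := Finset.sum_range_succ' _ _
  have h3 : ∑ i ∈ Finset.range (g + 2), (g.choose i : ℤ) * f i
      = ∑ i ∈ Finset.range (g + 1), (g.choose i : ℤ) * f i := by
    rw [Finset.sum_range_succ]
    simp [Nat.choose_eq_zero_of_lt (by omega : g < g + 1)]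
  rw [h1]
  have h4 : ∀ i ∈ Finset.range (g + 1),
      ((g + 1).choose (i + 1) : ℤ) * f (i + 1)
        = (g.choose (i + 1) : ℤ) * f (i + 1) + (g.choose i : ℤ) * f (i + 1) := by
    intro i _
    rw [Nat.choose_succ_succ]
    push_cast
    ring
  rw [Finset.sum_congr rfl h4, Finset.sum_add_distrib]
  have h5 : (∑ i ∈ Finset.range (g + 1), (g.choose (i + 1) : ℤ) * f (i + 1))
      = ∑ i ∈ Finset.range (g + 1), (g.choose i : ℤ) * f i - (g.choose 0 : ℤ) * f 0 := by
    rw [← h3, h2]; ring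
  rw [h5]
  simp only [Nat.choose_zero_right, Nat.cast_one, one_mul]
  ring

lemma fibZ_odd (i : ℕ) : fibZ (2 * (i : ℤ) + 1) = (Nat.fib (2 * i + 1) : ℤ) := by
  unfold fibZ
  rw [if_neg (by omega)]
  congr 1

lemma a_succ (g : ℕ) : a (g + 1) = a g + b g := by
  unfold a b
  have := pascal_sum g (fun i => fibZ (2 * (i : ℤ) - 1))
  rw [this]
  congr 1
  apply Finset.sum_congr rfl
  intro i _
  congr 2
  push_cast
  ring

lemma fib_step (i : ℕ) : fibZ (2 * (i : ℤ) + 3) = 3 * fibZ (2 * (i : ℤ) + 1) - fibZ (2 * (i : ℤ) - 1) := by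
  cases i with
  | zero => norm_num [fibZ]; decide
  | succ n =>
    have e1 : (2 * ((n : ℤ) + 1) + 3) = ((2 * n + 5 : ℕ) : ℤ) := by push_cast; ring
    have e2 : (2 * ((n : ℤ) + 1) + 1) = ((2 * n + 3 : ℕ) : ℤ) := by push_cast; ring
    have e3 : (2 * ((n : ℤ) + 1) - 1) = ((2 * n + 1 : ℕ) : ℤ) := by push_cast; ring
    push_cast
    rw [e1, e2, e3]
    unfold fibZ
    rw [if_neg (by omega), if_neg (by omega), if_neg (by omega)]
    simp only [Int.toNat_natCast]
    have : Nat.fib (2 * n + 5) + Nat.fib (2 * n + 1) = 3 * Nat.fib (2 * n + 3) := by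
      have h1 := Nat.fib_add_two (n := 2*n+3)
      have h2 := Nat.fib_add_two (n := 2*n+2)
      have h3 := Nat.fib_add_two (n := 2*n+1)
      simp only [show 2*n+3+2 = 2*n+5 by omega, show 2*n+3+1 = 2*n+4 by omega] at h1
      simp only [show 2*n+2+2 = 2*n+4 by omega, show 2*n+2+1 = 2*n+3 by omega] at h2
      simp only [show 2*n+1+2 = 2*n+3 by omega, show 2*n+1+1 = 2*n+2 by omega] at h3
      omega
    have := congrArg (fun x : ℕ => (x : ℤ)) this
    push_cast at this
    linarith

lemma b_succ (g : ℕ) : b (g + 1) = 4 * b g - a g := by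
  unfold b
  have := pascal_sum g (fun i => fibZ (2 * (i : ℤ) + 1))
  rw [this]
  have hc : ∀ i ∈ Finset.range (g + 1),
      (g.choose i : ℤ) * fibZ (2 * ((i : ℤ) + 1) + 1)
        = 3 * ((g.choose i : ℤ) * fibZ (2 * (i : ℤ) + 1))
          - (g.choose i : ℤ) * fibZ (2 * (i : ℤ) - 1) := by
    intro i _
    have h : (2 * ((i : ℤ) + 1) + 1) = 2 * (i : ℤ) + 3 := by ring
    rw [h, fib_step]
    ring
  have hc' : ∀ i ∈ Finset.range (g + 1),
      (g.choose i : ℤ) * fibZ (2 * (↑(i + 1) : ℤ) + 1)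
        = 3 * ((g.choose i : ℤ) * fibZ (2 * (i : ℤ) + 1))
          - (g.choose i : ℤ) * fibZ (2 * (i : ℤ) - 1) := by
    intro i hi
    have := hc i hi
    push_cast at this ⊢
    exact this
  rw [Finset.sum_congr rfl hc', Finset.sum_sub_distrib, ← Finset.mul_sum]
  simp only [a, b]
  ring

theorem stmt_12 (g : ℕ) : a (g + 2) = 5 * a (g + 1) - 5 * a g := by
  have h1 : a (g + 2) = a (g + 1) + b (g + 1) := a_succ (g + 1)
  have h2 : a (g + 1) = a g + b g := a_succ g
  have h3 : b (g + 1) = 4 * b g - a g := b_succ g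
  linarith
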